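/- Let Q^start ≤ Q^end be level-L quadrants such that the bitwise and satisfies Q AND Q^end = Q for all Q with Q^start ≤ Q ≤ Q^end. Then the interior of Y = ⋃_{Q=Q^start}^{Q^end} Ω(Q) ⊆ ℝ^d is star-shaped. -/

import Mathlib

/-- The `r`-th coordinate (1 ≤ r ≤ d) of a level-`L` quadrant `Q` in dimension `d`. -/
def mortonCoord (d L r Q : ℕ) : ℕ :=
  ∑ ℓ ∈ Finset.range L, (Q / 2 ^ (ℓ * d + (r - 1)) % 2) * 2 ^ ℓ

/-- Two level-`L` quadrants are face-neighbors: they differ by exactly one in exactly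
one coordinate and agree in all other coordinates. -/
def MortonFaceNbr (d L Q Q' : ℕ) : Prop :=
  Q ≠ Q' ∧ ∃ r, 1 ≤ r ∧ r ≤ d ∧
    ((mortonCoord d L r Q : ℤ) - (mortonCoord d L r Q' : ℤ)).natAbs = 1 ∧
    ∀ s, 1 ≤ s → s ≤ d → s ≠ r → mortonCoord d L s Q = mortonCoord d L s Q'

/-- A set of level-`L` quadrants is face-connected: the graph on `S` whose edges join
face-neighbors is connected. -/
def MortonFaceConnected (d L : ℕ) (S : Set ℕ) : Prop :=
  ∀ Q ∈ S, ∀ Q' ∈ S,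
    Relation.ReflTransGen (fun a b => a ∈ S ∧ b ∈ S ∧ MortonFaceNbr d L a b) Q Q'

/-- `S` has at most `n` face-connected components: it can be written as a union of `n`
face-connected subsets. -/
def MortonCompBound (d L : ℕ) (S : Set ℕ) (n : ℕ) : Prop :=
  ∃ f : Fin n → Set ℕ, S = ⋃ i, f i ∧ ∀ i, MortonFaceConnected d L (f i)

/-- The closed box `Ω(Q) = Π_r [2^{-L} Q_r, 2^{-L}(Q_r + 1)] ⊆ ℝ^d` occupied by the
level-`L` quadrant `Q`. -/
def mortonOmega (d L Q : ℕ) : Set (Fin d → ℝ) :=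
  {x | ∀ r : Fin d,
    (mortonCoord d L ((r : ℕ) + 1) Q : ℝ) / 2 ^ L ≤ x r ∧
    x r ≤ ((mortonCoord d L ((r : ℕ) + 1) Q : ℝ) + 1) / 2 ^ L}

/-- `A ⊆ ℝ^d` is star-shaped with respect to `p`. -/
def StarShapedWrt {d : ℕ} (A : Set (Fin d → ℝ)) (p : Fin d → ℝ) : Prop :=
  p ∈ A ∧ ∀ x ∈ A, segment ℝ p x ⊆ A

/-- `A ⊆ ℝ^d` is star-shaped with respect to some point of `A`. -/
def StarShaped {d : ℕ} (A : Set (Fin d → ℝ)) : Prop :=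
  ∃ p, StarShapedWrt A p


namespace MortonAux

lemma digit_le_one (Q i : ℕ) : Q / 2 ^ i % 2 ≤ 1 :=
  Nat.lt_succ_iff.mp (Nat.mod_lt _ two_pos)

lemma sum_lt (b : ℕ → ℕ) (hb : ∀ i, b i ≤ 1) (n : ℕ) :
    (∑ i ∈ Finset.range n, b i * 2 ^ i) < 2 ^ n := by
  induction n with
  | zero => simp
  | succ n ih =>
    rw [Finset.sum_range_succ, pow_succ]
    have h1 : b n * 2 ^ n ≤ 1 * 2 ^ n := Nat.mul_le_mul_right _ (hb n)
    rw [one_mul] at h1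
    omega

lemma bit_of_bitsum (b : ℕ → ℕ) (hb : ∀ i, b i ≤ 1) (n j : ℕ) :
    (∑ i ∈ Finset.range n, b i * 2 ^ i) / 2 ^ j % 2 = if j < n then b j else 0 := by
  induction n with
  | zero => simp [Nat.div_eq_of_lt (Nat.two_pow_pos _)]
  | succ n ih =>
    rw [Finset.sum_range_succ]
    rcases lt_trichotomy j n with h | h | h
    · -- j < n : extra term is a multiple of 2^(j+1)
      have hd : 2 ^ n = 2 ^ (n - j - 1) * 2 * 2 ^ j := by
        rw [mul_assoc, ← pow_succ']
        rw [← pow_add]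
        congr 1
        omega
      rw [hd, ← mul_assoc, Nat.add_mul_div_right _ _ (Nat.two_pow_pos j)]
      rw [← mul_assoc, Nat.add_mul_mod_self_right]
      rw [ih]
      simp [h, Nat.lt_succ_of_lt h]
    · -- j = n
      subst h
      have h1 : (∑ i ∈ Finset.range j, b i * 2 ^ i) < 2 ^ j := sum_lt b hb j
      rw [Nat.add_mul_div_right _ _ (Nat.two_pow_pos j),
        Nat.div_eq_of_lt h1]
      simp [Nat.mod_eq_of_lt (Nat.lt_succ_of_le (hb j))]
    · -- j > n
      have h1 : (∑ i ∈ Finset.range n, b i * 2 ^ i) + b n * 2 ^ n < 2 ^ (n + 1) := by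
        have h2 := sum_lt b hb n
        have h3 : b n * 2 ^ n ≤ 1 * 2 ^ n := Nat.mul_le_mul_right _ (hb n)
        rw [one_mul] at h3
        rw [pow_succ]
        omega
      have h2 : (∑ i ∈ Finset.range n, b i * 2 ^ i) + b n * 2 ^ n < 2 ^ j :=
        lt_of_lt_of_le h1 (Nat.pow_le_pow_right (by norm_num) h)
      rw [Nat.div_eq_of_lt h2, if_neg (by omega)]

lemma recon (n Q : ℕ) :
    (∑ i ∈ Finset.range n, (Q / 2 ^ i % 2) * 2 ^ i) = Q % 2 ^ n := by
  induction n with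
  | zero => simp [Nat.mod_one]
  | succ n ih =>
    rw [Finset.sum_range_succ, ih, pow_succ, Nat.mod_mul]
    ring

end MortonAux

namespace MortonAux

lemma digit_mod (a n ℓ : ℕ) (h : ℓ < n) : a % 2 ^ n / 2 ^ ℓ % 2 = a / 2 ^ ℓ % 2 := by
  have h1 := Nat.testBit_mod_two_pow a n ℓ
  rw [decide_eq_true h, Bool.true_and, Nat.testBit_eq_decide_div_mod_eq, Nat.testBit_eq_decide_div_mod_eq] at h1
  have h2 := digit_le_one (a % 2 ^ n) ℓ
  have h3 := digit_le_one a ℓ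
  have h4 := decide_eq_decide.mp h1
  omega

def S (d r n a : ℕ) : ℕ := ∑ ℓ ∈ Finset.range n, (a / 2 ^ ℓ % 2) * 2 ^ (ℓ * d + r)

def enc (d L : ℕ) (k : ℕ → ℕ) : ℕ := ∑ r ∈ Finset.range d, S d r L (k r)

lemma geo (d r : ℕ) (hd : 1 ≤ d) (n : ℕ) :
    ∑ ℓ ∈ Finset.range n, 2 ^ (ℓ * d + r) < 2 ^ (n * d + r) := by
  induction n with
  | zero => simp
  | succ n ih =>
    rw [Finset.sum_range_succ]
    have h1 : 2 ^ (n * d + r) + 2 ^ (n * d + r) ≤ 2 ^ ((n + 1) * d + r) := by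
      rw [← two_mul, ← pow_succ']
      apply Nat.pow_le_pow_right (by norm_num)
      have : (n + 1) * d = n * d + d := by ring
      omega
    omega

lemma S_le (d r n a : ℕ) : S d r n a ≤ ∑ ℓ ∈ Finset.range n, 2 ^ (ℓ * d + r) := by
  apply Finset.sum_le_sum
  intro ℓ _
  have h1 := Nat.mul_le_mul_right (2 ^ (ℓ * d + r)) (digit_le_one a ℓ)
  omega

lemma S_mod (d r n a : ℕ) : S d r n (a % 2 ^ n) = S d r n a := by
  apply Finset.sum_congr rfl
  intro ℓ hℓ
  rw [digit_mod a n ℓ (Finset.mem_range.mp hℓ)]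

lemma S_mono (d r : ℕ) (hd : 1 ≤ d) :
    ∀ n a a', a ≤ a' → a' < 2 ^ n → S d r n a ≤ S d r n a' := by
  intro n
  induction n with
  | zero =>
    intro a a' h h'
    have : a' = 0 := by omega
    have : a = 0 := by omega
    subst this
    simp [S]
  | succ n ih =>
    intro a a' h h'
    have hpos : 0 < (2 : ℕ) ^ n := Nat.two_pow_pos n
    have hbits : a / 2 ^ n ≤ a' / 2 ^ n := Nat.div_le_div_right h
    have hb' : a' / 2 ^ n ≤ 1 := by
      have h2 : a' / 2 ^ n < 2 := by
        apply (Nat.div_lt_iff_lt_mul hpos).mpr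
        rw [← pow_succ']
        exact h'
      omega
    have ha1 : a / 2 ^ n % 2 = a / 2 ^ n := Nat.mod_eq_of_lt (by omega)
    have ha2 : a' / 2 ^ n % 2 = a' / 2 ^ n := Nat.mod_eq_of_lt (by omega)
    rw [show S d r (n+1) a = S d r n a + (a / 2 ^ n % 2) * 2 ^ (n * d + r) from
        Finset.sum_range_succ _ n,
      show S d r (n+1) a' = S d r n a' + (a' / 2 ^ n % 2) * 2 ^ (n * d + r) from
        Finset.sum_range_succ _ n]
    rcases eq_or_lt_of_le hbits with heq | hlt
    · have e1 := Nat.div_add_mod a (2 ^ n)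
      have e2 := Nat.div_add_mod a' (2 ^ n)
      rw [← heq] at e2
      have hmod : a % 2 ^ n ≤ a' % 2 ^ n := by omega
      have hmod' : a' % 2 ^ n < 2 ^ n := Nat.mod_lt _ hpos
      have h5 := ih (a % 2 ^ n) (a' % 2 ^ n) hmod hmod'
      rw [S_mod, S_mod] at h5
      rw [ha1, ha2, heq]
      omega
    · have h0 : a / 2 ^ n = 0 := by omega
      have h1' : a' / 2 ^ n = 1 := by omega
      rw [ha1, ha2, h0, h1']
      have h6 : S d r n a < 2 ^ (n * d + r) :=
        lt_of_le_of_lt (S_le d r n a) (geo d r hd n)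
      omega

lemma interleave_mod {d r ℓ : ℕ} (hr : r < d) : (ℓ * d + r) % d = r := by
  rw [mul_comm, Nat.mul_add_mod, Nat.mod_eq_of_lt hr]

lemma interleave_div {d r ℓ : ℕ} (hr : r < d) : (ℓ * d + r) / d = ℓ := by
  rw [mul_comm, Nat.mul_add_div (by omega), Nat.div_eq_of_lt hr, Nat.add_zero]

lemma interleave_lt {d L ℓ r : ℕ} (hℓ : ℓ < L) (hr : r < d) : ℓ * d + r < d * L := by
  have h1 : ℓ * d + r < (ℓ + 1) * d := by
    have : (ℓ + 1) * d = ℓ * d + d := by ring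
    omega
  have h2 : (ℓ + 1) * d ≤ L * d := Nat.mul_le_mul_right d hℓ
  have h3 : L * d = d * L := Nat.mul_comm L d
  omega

lemma enc_eq_bitsum (d L : ℕ) (hd : 1 ≤ d) (k : ℕ → ℕ) :
    enc d L k = ∑ i ∈ Finset.range (d * L), (k (i % d) / 2 ^ (i / d) % 2) * 2 ^ i := by
  rw [enc]
  simp only [S]
  rw [← Finset.sum_product']
  apply Finset.sum_nbij' (i := fun p : ℕ × ℕ => p.2 * d + p.1) (j := fun i => (i % d, i / d))
  · rintro ⟨r, ℓ⟩ hp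
    simp only [Finset.mem_product, Finset.mem_range] at hp
    exact Finset.mem_range.mpr (interleave_lt hp.2 hp.1)
  · intro i hi
    simp only [Finset.mem_range] at hi
    simp only [Finset.mem_product, Finset.mem_range]
    constructor
    · exact Nat.mod_lt _ (by omega)
    · exact Nat.div_lt_of_lt_mul (by omega)
  · rintro ⟨r, ℓ⟩ hp
    simp only [Finset.mem_product, Finset.mem_range] at hp
    have h1 : (ℓ * d + r) % d = r := interleave_mod hp.1
    have h2 : (ℓ * d + r) / d = ℓ := interleave_div hp.1
    simp [h1, h2]
  · intro i hi
    simp only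
    rw [Nat.div_add_mod']
  · rintro ⟨r, ℓ⟩ hp
    simp only [Finset.mem_product, Finset.mem_range] at hp
    have h1 : (ℓ * d + r) % d = r := interleave_mod hp.1
    have h2 : (ℓ * d + r) / d = ℓ := interleave_div hp.1
    simp [h1, h2]

end MortonAux


namespace MortonAux

lemma mortonCoord_eq_sum (d L r Q : ℕ) :
    mortonCoord d L (r + 1) Q = ∑ ℓ ∈ Finset.range L, (Q / 2 ^ (ℓ * d + r) % 2) * 2 ^ ℓ := by
  simp [mortonCoord]

lemma mortonCoord_lt (d L r Q : ℕ) : mortonCoord d L r Q < 2 ^ L :=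
  sum_lt _ (fun ℓ => digit_le_one ..) L

lemma coord_digit {d L : ℕ} (r Q ℓ : ℕ) (hℓ : ℓ < L) :
    mortonCoord d L (r + 1) Q / 2 ^ ℓ % 2 = Q / 2 ^ (ℓ * d + r) % 2 := by
  rw [mortonCoord_eq_sum, bit_of_bitsum _ (fun i => digit_le_one ..), if_pos hℓ]

lemma enc_digit {d L : ℕ} (hd : 1 ≤ d) (k : ℕ → ℕ) {r ℓ : ℕ} (hr : r < d) (hℓ : ℓ < L) :
    enc d L k / 2 ^ (ℓ * d + r) % 2 = k r / 2 ^ ℓ % 2 := by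
  rw [enc_eq_bitsum d L hd k,
    bit_of_bitsum _ (fun i => digit_le_one ..) _ _,
    if_pos (Finset.mem_range.mp (Finset.mem_range.mpr (interleave_lt hℓ hr))),
    interleave_mod hr, interleave_div hr]

lemma coord_enc {d L : ℕ} (hd : 1 ≤ d) (k : ℕ → ℕ) {r : ℕ} (hr : r < d) (hk : k r < 2 ^ L) :
    mortonCoord d L (r + 1) (enc d L k) = k r := by
  rw [mortonCoord_eq_sum]
  have h1 : ∀ ℓ ∈ Finset.range L,
      (enc d L k / 2 ^ (ℓ * d + r) % 2) * 2 ^ ℓ = (k r / 2 ^ ℓ % 2) * 2 ^ ℓ := by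
    intro ℓ hℓ
    rw [enc_digit hd k hr (Finset.mem_range.mp hℓ)]
  rw [Finset.sum_congr rfl h1, recon, Nat.mod_eq_of_lt hk]

lemma enc_coord {d L Q : ℕ} (hd : 1 ≤ d) (hQ : Q < 2 ^ (d * L)) :
    enc d L (fun r => mortonCoord d L (r + 1) Q) = Q := by
  rw [enc_eq_bitsum d L hd]
  have h1 : ∀ i ∈ Finset.range (d * L),
      (mortonCoord d L (i % d + 1) Q / 2 ^ (i / d) % 2) * 2 ^ i = (Q / 2 ^ i % 2) * 2 ^ i := by
    intro i hi
    have hi' := Finset.mem_range.mp hi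
    have hdiv : i / d < L := Nat.div_lt_of_lt_mul (by omega)
    rw [coord_digit (i % d) Q (i / d) hdiv, Nat.div_add_mod']
  rw [Finset.sum_congr rfl h1, recon, Nat.mod_eq_of_lt hQ]

lemma enc_mono {d L : ℕ} (hd : 1 ≤ d) (k k' : ℕ → ℕ)
    (h : ∀ r, r < d → k r ≤ k' r) (h' : ∀ r, r < d → k' r < 2 ^ L) :
    enc d L k ≤ enc d L k' := by
  apply Finset.sum_le_sum
  intro r hr
  have hr' := Finset.mem_range.mp hr
  exact S_mono d r hd L (k r) (k' r) (h r hr') (h' r hr')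

lemma and_digit_le {Q M : ℕ} (h : Q &&& M = Q) (i : ℕ) :
    Q / 2 ^ i % 2 ≤ M / 2 ^ i % 2 := by
  have h1 : (Q &&& M).testBit i = (Q.testBit i && M.testBit i) := Nat.testBit_and ..
  rw [h] at h1
  simp only [Nat.testBit_eq_decide_div_mod_eq] at h1
  have h2 := digit_le_one Q i
  have h3 := digit_le_one M i
  by_cases hQ1 : Q / 2 ^ i % 2 = 1
  · by_cases hM1 : M / 2 ^ i % 2 = 1
    · omega
    · exfalso
      rw [decide_eq_true hQ1, decide_eq_false hM1] at h1
      simp at h1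
  · omega

lemma coord_le_of_and {d L r Q M : ℕ} (h : Q &&& M = Q) :
    mortonCoord d L r Q ≤ mortonCoord d L r M := by
  apply Finset.sum_le_sum
  intro ℓ _
  exact Nat.mul_le_mul_right _ (and_digit_le h _)

end MortonAux

namespace MortonAux

lemma star_interior {n : ℕ} (A : Set (Fin n → ℝ)) (p : Fin n → ℝ)
    (hstar : ∀ x ∈ A, segment ℝ p x ⊆ A) (hp : p ∈ interior A) :
    ∀ x ∈ interior A, segment ℝ p x ⊆ interior A := by
  intro x hx y hy
  obtain ⟨a, b, ha, hb, hab, rfl⟩ := hy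
  rcases eq_or_lt_of_le hb with hb0 | hbpos
  · have ha1 : a = 1 := by linarith
    rw [← hb0, ha1]
    simpa using hp
  · have h1 : IsOpenMap (fun z : Fin n → ℝ => b • z) := isOpenMap_smul₀ (ne_of_gt hbpos)
    have h2 : IsOpenMap (fun z : Fin n → ℝ => a • p + z) := isOpenMap_add_left _
    have hmap : IsOpenMap (fun z : Fin n → ℝ => a • p + b • z) := h2.comp h1
    have hsub : (fun z : Fin n → ℝ => a • p + b • z) '' interior A ⊆ A := by
      rintro _ ⟨z, hz, rfl⟩
      exact hstar z (interior_subset hz) ⟨a, b, ha, hb, hab, rfl⟩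
    have hopen := hmap (interior A) isOpen_interior
    exact interior_maximal hsub hopen ⟨x, hx, rfl⟩

end MortonAux





/-- If `Q &&& Qend = Q` (bitwise and) for all `Q` in `{Qstart, …, Qend}`, then the
interior of `Y = ⋃_{Q=Qstart}^{Qend} Ω(Q)` is star-shaped. -/
theorem morton_and_union_starshaped (d L Qstart Qend : ℕ) (hd : 1 ≤ d)
    (hle : Qstart ≤ Qend) (hQend : Qend < 2 ^ (d * L))
    (hand : ∀ Q, Qstart ≤ Q → Q ≤ Qend → Q &&& Qend = Q) :
    StarShaped (interior (⋃ Q ∈ Set.Icc Qstart Qend, mortonOmega d L Q)) := by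
  classical
  set Y := ⋃ Q ∈ Set.Icc Qstart Qend, mortonOmega d L Q with hY
  have hpow : (0 : ℝ) < 2 ^ L := by positivity
  set p : Fin d → ℝ :=
    fun r => ((mortonCoord d L ((r : ℕ) + 1) Qend : ℝ) + 2⁻¹) / 2 ^ L with hp
  -- star property of Y with respect to p
  have hstar : ∀ x ∈ Y, segment ℝ p x ⊆ Y := by
    intro x hx
    obtain ⟨Q, hQmem, hxQ⟩ := Set.mem_iUnion₂.mp hx
    rw [Set.mem_Icc] at hQmem
    obtain ⟨hQ1, hQ2⟩ := hQmem
    have hQand := hand Q hQ1 hQ2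
    intro y hy
    obtain ⟨a, b, ha, hb, hab, rfl⟩ := hy
    have hcle : ∀ r : ℕ, mortonCoord d L (r + 1) Q ≤ mortonCoord d L (r + 1) Qend :=
      fun r => MortonAux.coord_le_of_and hQand
    have hcMlt : ∀ r : ℕ, mortonCoord d L (r + 1) Qend < 2 ^ L :=
      fun r => MortonAux.mortonCoord_lt ..
    set k : ℕ → ℕ := fun r =>
      if h : r < d then
        min (max (⌊(2 ^ L : ℝ) * (a • p + b • x) ⟨r, h⟩⌋₊) (mortonCoord d L (r + 1) Q))
          (mortonCoord d L (r + 1) Qend)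
      else 0 with hk
    have hkQ : ∀ r, r < d → mortonCoord d L (r + 1) Q ≤ k r := by
      intro r hr
      rw [hk]
      simp only [dif_pos hr]
      exact le_min (le_max_right _ _) (hcle r)
    have hkM : ∀ r, r < d → k r ≤ mortonCoord d L (r + 1) Qend := by
      intro r hr
      rw [hk]
      simp only [dif_pos hr]
      exact min_le_right _ _
    have hQlt : Q < 2 ^ (d * L) := lt_of_le_of_lt hQ2 hQend
    have hQenc : MortonAux.enc d L (fun r => mortonCoord d L (r + 1) Q) = Q :=
      MortonAux.enc_coord hd hQlt
    have hMenc : MortonAux.enc d L (fun r => mortonCoord d L (r + 1) Qend) = Qend :=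
      MortonAux.enc_coord hd hQend
    have hklt : ∀ r, r < d → k r < 2 ^ L :=
      fun r hr => lt_of_le_of_lt (hkM r hr) (hcMlt r)
    have hlow : Q ≤ MortonAux.enc d L k := by
      rw [← hQenc]
      exact MortonAux.enc_mono hd _ _ hkQ hklt
    have hhigh : MortonAux.enc d L k ≤ Qend := by
      rw [← hMenc]
      exact MortonAux.enc_mono hd _ _ hkM (fun r _ => hcMlt r)
    have hmem : (a • p + b • x) ∈ mortonOmega d L (MortonAux.enc d L k) := by
      simp only [mortonOmega, Set.mem_setOf_eq]
      intro r
      have hrd : (r : ℕ) < d := r.isLt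
      rw [MortonAux.coord_enc hd k hrd (hklt _ hrd)]
      have hyr : (a • p + b • x) r = a * p r + b * x r := by
        simp [smul_eq_mul]
      have hpr : p r = ((mortonCoord d L ((r : ℕ) + 1) Qend : ℝ) + 2⁻¹) / 2 ^ L := by
        rw [hp]
      have hxr := hxQ r
      -- real bounds for y r
      have hcleR : (mortonCoord d L ((r : ℕ) + 1) Q : ℝ)
          ≤ (mortonCoord d L ((r : ℕ) + 1) Qend : ℝ) := by
        exact_mod_cast hcle (r : ℕ)
      have hyl : (mortonCoord d L ((r : ℕ) + 1) Q : ℝ) / 2 ^ L ≤ (a • p + b • x) r := by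
        rw [hyr]
        have e1 : (mortonCoord d L ((r : ℕ) + 1) Q : ℝ) / 2 ^ L ≤ p r := by
          rw [hpr]
          gcongr
          linarith
        calc (mortonCoord d L ((r : ℕ) + 1) Q : ℝ) / 2 ^ L
            = a * ((mortonCoord d L ((r : ℕ) + 1) Q : ℝ) / 2 ^ L)
              + b * ((mortonCoord d L ((r : ℕ) + 1) Q : ℝ) / 2 ^ L) := by
              rw [← add_mul, hab, one_mul]
          _ ≤ a * p r + b * x r :=
              add_le_add (mul_le_mul_of_nonneg_left e1 ha)
                (mul_le_mul_of_nonneg_left hxr.1 hb)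
      have hyu : (a • p + b • x) r ≤ ((mortonCoord d L ((r : ℕ) + 1) Qend : ℝ) + 1) / 2 ^ L := by
        rw [hyr]
        have e1 : p r ≤ ((mortonCoord d L ((r : ℕ) + 1) Qend : ℝ) + 1) / 2 ^ L := by
          rw [hpr]
          gcongr
          norm_num
        have e2 : x r ≤ ((mortonCoord d L ((r : ℕ) + 1) Qend : ℝ) + 1) / 2 ^ L := by
          refine le_trans hxr.2 ?_
          gcongr
        calc a * p r + b * x r
            ≤ a * (((mortonCoord d L ((r : ℕ) + 1) Qend : ℝ) + 1) / 2 ^ L)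
              + b * (((mortonCoord d L ((r : ℕ) + 1) Qend : ℝ) + 1) / 2 ^ L) :=
              add_le_add (mul_le_mul_of_nonneg_left e1 ha)
                (mul_le_mul_of_nonneg_left e2 hb)
          _ = ((mortonCoord d L ((r : ℕ) + 1) Qend : ℝ) + 1) / 2 ^ L := by
              rw [← add_mul, hab, one_mul]
      -- floor analysis
      have h2l : (mortonCoord d L ((r : ℕ) + 1) Q : ℝ) ≤ 2 ^ L * (a • p + b • x) r := by
        rw [mul_comm]
        exact (div_le_iff₀ hpow).mp hyl
      have h2u : 2 ^ L * (a • p + b • x) r ≤ (mortonCoord d L ((r : ℕ) + 1) Qend : ℝ) + 1 := by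
        rw [mul_comm]
        exact (le_div_iff₀ hpow).mp hyu
      have hnonneg : (0 : ℝ) ≤ 2 ^ L * (a • p + b • x) r :=
        le_trans (by positivity) h2l
      set nr : ℕ := ⌊(2 ^ L : ℝ) * (a • p + b • x) r⌋₊ with hnr
      have hge : mortonCoord d L ((r : ℕ) + 1) Q ≤ nr := Nat.le_floor h2l
      have hkr : k (r : ℕ) = min nr (mortonCoord d L ((r : ℕ) + 1) Qend) := by
        have hfin : (⟨(r : ℕ), hrd⟩ : Fin d) = r := rfl
        rw [hk]
        simp only [dif_pos hrd, hfin, ← hnr]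
        rw [max_eq_left hge]
      rcases le_or_gt nr (mortonCoord d L ((r : ℕ) + 1) Qend) with h5 | h5
      · rw [hkr, min_eq_left h5]
        constructor
        · rw [div_le_iff₀ hpow]
          have h := Nat.floor_le hnonneg
          rw [← hnr] at h
          linarith
        · rw [le_div_iff₀ hpow]
          have h := (Nat.lt_floor_add_one ((2 : ℝ) ^ L * (a • p + b • x) r)).le
          rw [← hnr] at h
          linarith
      · rw [hkr, min_eq_right h5.le]
        constructor
        · rw [div_le_iff₀ hpow]
          have h := Nat.floor_le hnonneg
          rw [← hnr] at h
          have h6 : ((mortonCoord d L ((r : ℕ) + 1) Qend : ℕ) : ℝ) ≤ (nr : ℝ) := by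
            exact_mod_cast h5.le
          linarith
        · rw [le_div_iff₀ hpow]
          linarith
    exact Set.mem_biUnion (Set.mem_Icc.mpr ⟨le_trans hQ1 hlow, hhigh⟩) hmem
  -- p is in the interior of Y
  have hint : p ∈ interior Y := by
    have hsub2 : (Set.univ.pi fun r : Fin d =>
        Set.Ioo ((mortonCoord d L ((r : ℕ) + 1) Qend : ℝ) / 2 ^ L)
          (((mortonCoord d L ((r : ℕ) + 1) Qend : ℝ) + 1) / 2 ^ L)) ⊆ Y := by
      intro z hz
      apply Set.mem_biUnion (Set.mem_Icc.mpr ⟨hle, le_refl _⟩)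
      intro r
      have h1 := hz r (Set.mem_univ r)
      exact ⟨le_of_lt h1.1, le_of_lt h1.2⟩
    have hopen : IsOpen (Set.univ.pi fun r : Fin d =>
        Set.Ioo ((mortonCoord d L ((r : ℕ) + 1) Qend : ℝ) / 2 ^ L)
          (((mortonCoord d L ((r : ℕ) + 1) Qend : ℝ) + 1) / 2 ^ L)) :=
      isOpen_set_pi Set.finite_univ (fun i _ => isOpen_Ioo)
    apply interior_maximal hsub2 hopen
    intro r _
    have hpr : p r = ((mortonCoord d L ((r : ℕ) + 1) Qend : ℝ) + 2⁻¹) / 2 ^ L := by rw [hp]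
    rw [hpr]
    constructor <;> gcongr <;> norm_num
  exact ⟨p, hint, MortonAux.star_interior Y p hstar hint⟩
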